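/- For exponential family densities p, q with parameters θ, θ_q, and any unit vector v: ∫ min{p,q}(v^⊤T(x))² dx ≥ (1/(2λ_max)) · B^{-2} · (E_{(θ+θ_q)/2}[(v^⊤T(x))²])², where B = √(Z(θ)Z(θ_q))/Z((θ+θ_q)/2) and λ_max bounds the largest eigenvalue of E_θ'[T(x)T(x)^⊤] uniformly. -/

import Mathlib

open MeasureTheory

private lemma sq_le_exp_add' (t : ℝ) : t ^ 2 ≤ Real.exp t + Real.exp (-t) := by
  have key : ∀ s : ℝ, 0 ≤ s → s ^ 2 ≤ Real.exp s := by
    intro s hs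
    have h1 : Real.exp (s / 4) * Real.exp (s / 4) = Real.exp (s / 2) := by
      rw [← Real.exp_add]; congr 1; ring
    have h3 : Real.exp (s / 2) * Real.exp (s / 2) = Real.exp s := by
      rw [← Real.exp_add]; congr 1; ring
    have h2 : s ≤ Real.exp (s / 2) := by
      nlinarith [Real.add_one_le_exp (s / 4), sq_nonneg (s / 4 - 1)]
    nlinarith [Real.exp_pos (s / 2)]
  rcases le_total 0 t with ht | ht
  · nlinarith [key t ht, Real.exp_pos (-t)]
  · nlinarith [key (-t) (by linarith), Real.exp_pos t]

/-- For exponential family densities `p = p_θ`, `q = p_{θq}` and any unit vector `v`: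
`∫ min{p,q}(vᵀT)² ≥ (1/(2 λmax)) · B⁻² · (E_{(θ+θq)/2}[(vᵀT)²])²`, where
`B = √(Z(θ)Z(θq))/Z((θ+θq)/2)` and `λmax` uniformly bounds the largest eigenvalue of
`E_{θ'}[T Tᵀ]`. -/
theorem min_pq_lower_bound {d k : ℕ}
    (h : (Fin d → ℝ) → ℝ) (hh : ∀ x, 0 ≤ h x)
    (T : (Fin d → ℝ) → Fin k → ℝ)
    (Z : (Fin k → ℝ) → ℝ)
    (hZ : ∀ θ', Z θ' = ∫ x, h x * Real.exp (∑ i, θ' i * T x i))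
    (hZpos : ∀ θ', 0 < Z θ')
    (p : (Fin k → ℝ) → (Fin d → ℝ) → ℝ)
    (hp : ∀ θ' x, p θ' x = h x * Real.exp ((∑ i, θ' i * T x i) - Real.log (Z θ')))
    (lammax : ℝ) (hlampos : 0 < lammax)
    (hmom : ∀ θ' (u : Fin k → ℝ), ∑ i, u i ^ 2 = 1 →
      ∫ x, p θ' x * (∑ i, u i * T x i) ^ 2 ≤ lammax)
    (θ θq θm : Fin k → ℝ) (hθm : ∀ i, θm i = (θ i + θq i) / 2)
    (v : Fin k → ℝ) (hv : ∑ i, v i ^ 2 = 1)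
    (hint1 : Integrable (fun x => min (p θ x) (p θq x) * (∑ i, v i * T x i) ^ 2))
    (hint2 : Integrable (fun x => p θm x * (∑ i, v i * T x i) ^ 2)) :
    (1 / (2 * lammax)) * (Real.sqrt (Z θ * Z θq) / Z θm)⁻¹ ^ 2 *
        (∫ x, p θm x * (∑ i, v i * T x i) ^ 2) ^ 2 ≤
      ∫ x, min (p θ x) (p θq x) * (∑ i, v i * T x i) ^ 2 := by
  -- notation
  have hp0 : ∀ θ' x, 0 ≤ p θ' x := fun θ' x => by
    rw [hp]; exact mul_nonneg (hh x) (Real.exp_pos _).le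
  have hsum_add : ∀ (θ' : Fin k → ℝ) (x),
      (∑ i, (θ' i + v i) * T x i) = (∑ i, θ' i * T x i) + ∑ i, v i * T x i := by
    intro θ' x
    rw [← Finset.sum_add_distrib]
    exact Finset.sum_congr rfl fun i _ => by ring
  have hsum_sub : ∀ (θ' : Fin k → ℝ) (x),
      (∑ i, (θ' i - v i) * T x i) = (∑ i, θ' i * T x i) - ∑ i, v i * T x i := by
    intro θ' x
    rw [← Finset.sum_sub_distrib]
    exact Finset.sum_congr rfl fun i _ => by ring
  -- Step A : each `h · exp(θ'·T)` is integrable, since its integral is `Z θ' > 0`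
  have hgint : ∀ θ' : Fin k → ℝ,
      Integrable (fun x => h x * Real.exp (∑ i, θ' i * T x i)) := by
    intro θ'
    by_contra hc
    have h0 := hZ θ'
    rw [integral_undef hc] at h0
    exact (hZpos θ').ne' h0
  -- Step B : a.e.-measurability of `h · exp(θ'·T) · (v·T)²`
  have hgfmeas : ∀ θ' : Fin k → ℝ,
      AEMeasurable (fun x => h x * Real.exp (∑ i, θ' i * T x i) * (∑ i, v i * T x i) ^ 2) := by
    intro θ'
    have hid : (fun x => h x * Real.exp (∑ i, θ' i * T x i) * (∑ i, v i * T x i) ^ 2)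
        = fun x => (h x * Real.exp (∑ i, θ' i * T x i)) *
            ((Real.log ((h x * Real.exp (∑ i, (fun j => θ' j + v j) i * T x i)) /
              (h x * Real.exp (∑ i, θ' i * T x i)))) *
             (Real.log ((h x * Real.exp (∑ i, (fun j => θ' j + v j) i * T x i)) /
              (h x * Real.exp (∑ i, θ' i * T x i))))) := by
      funext x
      rcases (hh x).lt_or_eq with hx | hx
      · have hr : (h x * Real.exp (∑ i, (fun j => θ' j + v j) i * T x i)) /
            (h x * Real.exp (∑ i, θ' i * T x i)) = Real.exp (∑ i, v i * T x i) := by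
          have e1 : (∑ i, (fun j => θ' j + v j) i * T x i)
              = (∑ i, θ' i * T x i) + ∑ i, v i * T x i := hsum_add θ' x
          rw [e1, Real.exp_add]
          have h1 : h x ≠ 0 := ne_of_gt hx
          have h2 : Real.exp (∑ i, θ' i * T x i) ≠ 0 := (Real.exp_pos _).ne'
          field_simp
        rw [hr, Real.log_exp]
        ring
      · rw [← hx]; ring
    rw [hid]
    have hlog : AEMeasurable (fun x => Real.log
        ((h x * Real.exp (∑ i, (fun j => θ' j + v j) i * T x i)) /
          (h x * Real.exp (∑ i, θ' i * T x i)))) volume :=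
      Real.measurable_log.comp_aemeasurable
        ((hgint (fun j => θ' j + v j)).aemeasurable.div (hgint θ').aemeasurable)
    exact (hgint θ').aemeasurable.mul (hlog.mul hlog)
  -- Step C : integrability of `h · exp(θ'·T) · (v·T)²`
  have hgfint : ∀ θ' : Fin k → ℝ,
      Integrable (fun x => h x * Real.exp (∑ i, θ' i * T x i) * (∑ i, v i * T x i) ^ 2) := by
    intro θ'
    refine Integrable.mono ((hgint (fun j => θ' j + v j)).add (hgint (fun j => θ' j - v j)))
      (hgfmeas θ').aestronglyMeasurable (Filter.Eventually.of_forall fun x => ?_)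
    have hb : h x * Real.exp (∑ i, θ' i * T x i) * (∑ i, v i * T x i) ^ 2 ≤
        (fun x => h x * Real.exp (∑ i, (fun j => θ' j + v j) i * T x i)) x
          + (fun x => h x * Real.exp (∑ i, (fun j => θ' j - v j) i * T x i)) x := by
      simp only
      rw [hsum_add θ' x, hsum_sub θ' x, Real.exp_add, sub_eq_add_neg, Real.exp_add]
      have hkey := sq_le_exp_add' (∑ i, v i * T x i)
      have hnn : 0 ≤ h x * Real.exp (∑ i, θ' i * T x i) :=
        mul_nonneg (hh x) (Real.exp_pos _).le
      nlinarith [mul_le_mul_of_nonneg_left hkey hnn]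
    have hnn1 : 0 ≤ h x * Real.exp (∑ i, θ' i * T x i) * (∑ i, v i * T x i) ^ 2 :=
      mul_nonneg (mul_nonneg (hh x) (Real.exp_pos _).le) (sq_nonneg _)
    have hnn2 : (0:ℝ) ≤ (fun x => h x * Real.exp (∑ i, (fun j => θ' j + v j) i * T x i)) x
        + (fun x => h x * Real.exp (∑ i, (fun j => θ' j - v j) i * T x i)) x :=
      add_nonneg (mul_nonneg (hh x) (Real.exp_pos _).le)
        (mul_nonneg (hh x) (Real.exp_pos _).le)
    rw [Real.norm_of_nonneg hnn1, Pi.add_apply, Real.norm_of_nonneg hnn2]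
    exact hb
  -- integrability of `p θ' · (v·T)²`
  have hpfint : ∀ θ' : Fin k → ℝ, Integrable (fun x => p θ' x * (∑ i, v i * T x i) ^ 2) := by
    intro θ'
    have he : (fun x => p θ' x * (∑ i, v i * T x i) ^ 2)
        = fun x => Real.exp (-Real.log (Z θ')) *
            (h x * Real.exp (∑ i, θ' i * T x i) * (∑ i, v i * T x i) ^ 2) := by
      funext x
      rw [hp, sub_eq_add_neg, Real.exp_add]
      ring
    rw [he]
    exact (hgfint θ').const_mul _
  -- the max-part
  have hmaxmeas : AEStronglyMeasurable
      (fun x => max (p θ x) (p θq x) * (∑ i, v i * T x i) ^ 2) volume := by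
    have he : (fun x => max (p θ x) (p θq x) * (∑ i, v i * T x i) ^ 2)
        = fun x => max (p θ x * (∑ i, v i * T x i) ^ 2) (p θq x * (∑ i, v i * T x i) ^ 2) := by
      funext x
      rw [max_mul_of_nonneg _ _ (sq_nonneg _)]
    rw [he]
    exact ((hpfint θ).aemeasurable.max (hpfint θq).aemeasurable).aestronglyMeasurable
  have hmaxle_ptwise : ∀ x, max (p θ x) (p θq x) * (∑ i, v i * T x i) ^ 2 ≤
      p θ x * (∑ i, v i * T x i) ^ 2 + p θq x * (∑ i, v i * T x i) ^ 2 := by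
    intro x
    have : max (p θ x) (p θq x) ≤ p θ x + p θq x :=
      max_le (le_add_of_nonneg_right (hp0 θq x)) (le_add_of_nonneg_left (hp0 θ x))
    nlinarith [sq_nonneg (∑ i, v i * T x i)]
  have hmaxint : Integrable (fun x => max (p θ x) (p θq x) * (∑ i, v i * T x i) ^ 2) := by
    refine Integrable.mono ((hpfint θ).add (hpfint θq)) hmaxmeas
      (Filter.Eventually.of_forall fun x => ?_)
    have hnn1 : 0 ≤ max (p θ x) (p θq x) * (∑ i, v i * T x i) ^ 2 :=
      mul_nonneg (le_max_of_le_left (hp0 θ x)) (sq_nonneg _)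
    have hnn2 : (0:ℝ) ≤ p θ x * (∑ i, v i * T x i) ^ 2 + p θq x * (∑ i, v i * T x i) ^ 2 := by
      have := hp0 θ x; have := hp0 θq x; positivity
    rw [Real.norm_of_nonneg hnn1, Pi.add_apply, Real.norm_of_nonneg hnn2]
    exact hmaxle_ptwise x
  have hmaxbound : (∫ x, max (p θ x) (p θq x) * (∑ i, v i * T x i) ^ 2) ≤ 2 * lammax := by
    have h1 : (∫ x, max (p θ x) (p θq x) * (∑ i, v i * T x i) ^ 2)
        ≤ ∫ x, (p θ x * (∑ i, v i * T x i) ^ 2 + p θq x * (∑ i, v i * T x i) ^ 2) :=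
      integral_mono hmaxint ((hpfint θ).add (hpfint θq)) hmaxle_ptwise
    rw [integral_add (hpfint θ) (hpfint θq)] at h1
    linarith [hmom θ v hv, hmom θq v hv]
  -- key pointwise identity
  have hABm : ∀ x, (∑ i, θm i * T x i)
      = ((∑ i, θ i * T x i) + ∑ i, θq i * T x i) / 2 := by
    intro x
    rw [← Finset.sum_add_distrib, Finset.sum_div]
    exact Finset.sum_congr rfl fun i _ => by rw [hθm]; ring
  have hsqrtZ : Real.sqrt (Z θ * Z θq)
      = Real.exp ((Real.log (Z θ) + Real.log (Z θq)) / 2) := by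
    have e : Real.exp ((Real.log (Z θ) + Real.log (Z θq)) / 2) ^ 2 = Z θ * Z θq := by
      rw [sq, ← Real.exp_add,
        show (Real.log (Z θ) + Real.log (Z θq)) / 2 + (Real.log (Z θ) + Real.log (Z θq)) / 2
          = Real.log (Z θ) + Real.log (Z θq) by ring,
        Real.exp_add, Real.exp_log (hZpos θ), Real.exp_log (hZpos θq)]
    rw [← e, Real.sqrt_sq (Real.exp_pos _).le]
  have hkey : ∀ x, Real.sqrt (min (p θ x) (p θq x) * (∑ i, v i * T x i) ^ 2) *
      Real.sqrt (max (p θ x) (p θq x) * (∑ i, v i * T x i) ^ 2)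
      = (Real.sqrt (Z θ * Z θq) / Z θm)⁻¹ * (p θm x * (∑ i, v i * T x i) ^ 2) := by
    intro x
    have hf0 : (0:ℝ) ≤ (∑ i, v i * T x i) ^ 2 := sq_nonneg _
    rw [← Real.sqrt_mul (mul_nonneg (le_min (hp0 θ x) (hp0 θq x)) hf0)]
    have e1 : min (p θ x) (p θq x) * (∑ i, v i * T x i) ^ 2 *
        (max (p θ x) (p θq x) * (∑ i, v i * T x i) ^ 2)
        = (p θ x * p θq x) * ((∑ i, v i * T x i) ^ 2 * (∑ i, v i * T x i) ^ 2) := by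
      rw [mul_mul_mul_comm, min_mul_max]
    rw [e1, Real.sqrt_mul (mul_nonneg (hp0 θ x) (hp0 θq x)),
      Real.sqrt_mul_self hf0]
    have e2 : p θ x * p θq x = (h x * Real.exp ((∑ i, θm i * T x i)
        - (Real.log (Z θ) + Real.log (Z θq)) / 2)) ^ 2 := by
      rw [hp, hp, hABm x, mul_mul_mul_comm, ← Real.exp_add, mul_pow, pow_two, pow_two,
        ← Real.exp_add]
      congr 2
      ring
    rw [e2, Real.sqrt_sq (mul_nonneg (hh x) (Real.exp_pos _).le)]
    have e3 : (Real.sqrt (Z θ * Z θq) / Z θm)⁻¹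
        = Real.exp (Real.log (Z θm) - (Real.log (Z θ) + Real.log (Z θq)) / 2) := by
      rw [inv_div, hsqrtZ, Real.exp_sub, Real.exp_log (hZpos θm)]
    have e4 : Real.exp ((∑ i, θm i * T x i) - (Real.log (Z θ) + Real.log (Z θq)) / 2)
        = Real.exp (Real.log (Z θm) - (Real.log (Z θ) + Real.log (Z θq)) / 2) *
          Real.exp ((∑ i, θm i * T x i) - Real.log (Z θm)) := by
      rw [← Real.exp_add]; congr 1; ring
    rw [e3, e4, hp θm x]
    ring
  -- Cauchy–Schwarz
  have hmem1 : MemLp (fun x => Real.sqrt (min (p θ x) (p θq x) * (∑ i, v i * T x i) ^ 2))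
      (ENNReal.ofReal 2) volume := by
    have h2 : ENNReal.ofReal (2:ℝ) = (2 : ENNReal) := by
      rw [show (2:ℝ) = ((2:ℕ):ℝ) by norm_num, ENNReal.ofReal_natCast]; norm_num
    rw [h2]
    refine (memLp_two_iff_integrable_sq
      (Real.continuous_sqrt.comp_aestronglyMeasurable hint1.1)).2 ?_
    have he : (fun x => Real.sqrt (min (p θ x) (p θq x) * (∑ i, v i * T x i) ^ 2) ^ 2)
        = fun x => min (p θ x) (p θq x) * (∑ i, v i * T x i) ^ 2 := by
      funext x
      exact Real.sq_sqrt (mul_nonneg (le_min (hp0 θ x) (hp0 θq x)) (sq_nonneg _))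
    rw [he]; exact hint1
  have hmem2 : MemLp (fun x => Real.sqrt (max (p θ x) (p θq x) * (∑ i, v i * T x i) ^ 2))
      (ENNReal.ofReal 2) volume := by
    have h2 : ENNReal.ofReal (2:ℝ) = (2 : ENNReal) := by
      rw [show (2:ℝ) = ((2:ℕ):ℝ) by norm_num, ENNReal.ofReal_natCast]; norm_num
    rw [h2]
    refine (memLp_two_iff_integrable_sq
      (Real.continuous_sqrt.comp_aestronglyMeasurable hmaxmeas)).2 ?_
    have he : (fun x => Real.sqrt (max (p θ x) (p θq x) * (∑ i, v i * T x i) ^ 2) ^ 2)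
        = fun x => max (p θ x) (p θq x) * (∑ i, v i * T x i) ^ 2 := by
      funext x
      exact Real.sq_sqrt (mul_nonneg (le_max_of_le_left (hp0 θ x)) (sq_nonneg _))
    rw [he]; exact hmaxint
  have hconj : (2:ℝ).HolderConjugate 2 := ⟨by norm_num, by norm_num, by norm_num⟩
  have hCS := integral_mul_le_Lp_mul_Lq_of_nonneg hconj
    (Filter.Eventually.of_forall fun x => Real.sqrt_nonneg _)
    (Filter.Eventually.of_forall fun x => Real.sqrt_nonneg _) hmem1 hmem2
  -- rewrite both sides of hCS
  have hL : (∫ x, Real.sqrt (min (p θ x) (p θq x) * (∑ i, v i * T x i) ^ 2) *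
      Real.sqrt (max (p θ x) (p θq x) * (∑ i, v i * T x i) ^ 2))
      = (Real.sqrt (Z θ * Z θq) / Z θm)⁻¹ * ∫ x, p θm x * (∑ i, v i * T x i) ^ 2 := by
    rw [show (fun x => Real.sqrt (min (p θ x) (p θq x) * (∑ i, v i * T x i) ^ 2) *
        Real.sqrt (max (p θ x) (p θq x) * (∑ i, v i * T x i) ^ 2))
        = fun x => (Real.sqrt (Z θ * Z θq) / Z θm)⁻¹ * (p θm x * (∑ i, v i * T x i) ^ 2)
        from funext hkey]
    exact integral_const_mul _ _
  have hR1 : (∫ x, Real.sqrt (min (p θ x) (p θq x) * (∑ i, v i * T x i) ^ 2) ^ (2:ℝ))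
      = ∫ x, min (p θ x) (p θq x) * (∑ i, v i * T x i) ^ 2 := by
    congr 1
    funext x
    rw [Real.rpow_two, Real.sq_sqrt (mul_nonneg (le_min (hp0 θ x) (hp0 θq x)) (sq_nonneg _))]
  have hR2 : (∫ x, Real.sqrt (max (p θ x) (p θq x) * (∑ i, v i * T x i) ^ 2) ^ (2:ℝ))
      = ∫ x, max (p θ x) (p θq x) * (∑ i, v i * T x i) ^ 2 := by
    congr 1
    funext x
    rw [Real.rpow_two, Real.sq_sqrt (mul_nonneg (le_max_of_le_left (hp0 θ x)) (sq_nonneg _))]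
  rw [hL, hR1, hR2] at hCS
  set c : ℝ := (Real.sqrt (Z θ * Z θq) / Z θm)⁻¹ with hc
  set I1 : ℝ := ∫ x, min (p θ x) (p θq x) * (∑ i, v i * T x i) ^ 2 with hI1
  set I2 : ℝ := ∫ x, p θm x * (∑ i, v i * T x i) ^ 2 with hI2
  set Im : ℝ := ∫ x, max (p θ x) (p θq x) * (∑ i, v i * T x i) ^ 2 with hIm
  have hI1nn : 0 ≤ I1 :=
    integral_nonneg fun x => mul_nonneg (le_min (hp0 θ x) (hp0 θq x)) (sq_nonneg _)
  have hImnn : 0 ≤ Im :=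
    integral_nonneg fun x => mul_nonneg (le_max_of_le_left (hp0 θ x)) (sq_nonneg _)
  have hI2nn : 0 ≤ I2 := integral_nonneg fun x => mul_nonneg (hp0 θm x) (sq_nonneg _)
  have hcnn : 0 ≤ c := by
    rw [hc]
    have : 0 ≤ Real.sqrt (Z θ * Z θq) / Z θm :=
      div_nonneg (Real.sqrt_nonneg _) (hZpos θm).le
    positivity
  -- square the Cauchy–Schwarz inequality
  have hsq : (c * I2) ^ 2 ≤ I1 * Im := by
    have h1 : (c * I2) ^ 2 ≤ (I1 ^ ((1:ℝ)/2) * Im ^ ((1:ℝ)/2)) ^ 2 :=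
      pow_le_pow_left₀ (mul_nonneg hcnn hI2nn) hCS 2
    have h2 : (I1 ^ ((1:ℝ)/2) * Im ^ ((1:ℝ)/2)) ^ 2 = I1 * Im := by
      rw [mul_pow, ← Real.rpow_natCast (I1 ^ ((1:ℝ)/2)) 2, ← Real.rpow_natCast (Im ^ ((1:ℝ)/2)) 2,
        ← Real.rpow_mul hI1nn, ← Real.rpow_mul hImnn]
      norm_num
    linarith [h1, h2.le, h2.ge]
  have hA : c ^ 2 * I2 ^ 2 ≤ 2 * lammax * I1 := by
    have h3 : I1 * Im ≤ I1 * (2 * lammax) := mul_le_mul_of_nonneg_left hmaxbound hI1nn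
    nlinarith [hsq]
  have hpos : (0:ℝ) < 1 / (2 * lammax) := by positivity
  have := mul_le_mul_of_nonneg_left hA hpos.le
  calc (1 / (2 * lammax)) * c ^ 2 * I2 ^ 2
      = (1 / (2 * lammax)) * (c ^ 2 * I2 ^ 2) := by ring
    _ ≤ (1 / (2 * lammax)) * (2 * lammax * I1) := this
    _ = I1 := by field_simp
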